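/- Let C ⊆ Z_{2^k}^n and C̃ = Φ(C) ⊆ Z_2^{mn} with m = 2^{k-1}. Then W_{C̃}(X,Y) = SW_C(W_{H_0}(X,Y), W_{H_1}(X,Y), W_{H_2}(X,Y)), where SW_C(X,Z,T) is the symmetrized weight enumerator of C obtained from the complete weight enumerator by substituting X for symbol 0, Z for all odd symbols, and T for all nonzero even symbols. -/

import Mathlib

open Finset

namespace Stmt13

lemma zmod2_cases (s : ZMod 2) : s = 0 ∨ s = 1 := by revert s; decide

noncomputable def eps (t : ZMod 2) : ℝ := if t = 1 then -1 else 1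

lemma eps_zero' : eps 0 = 1 := by norm_num [eps]
lemma eps_one' : eps 1 = -1 := by norm_num [eps]

lemma eps_add (s t : ZMod 2) : eps (s + t) = eps s * eps t := by
  rcases zmod2_cases s with rfl | rfl <;> rcases zmod2_cases t with rfl | rfl <;>
    simp [eps_zero', eps_one', show (1 + 1 : ZMod 2) = 0 from by decide]

lemma eps_zero : eps 0 = 1 := by norm_num [eps]
lemma eps_one : eps 1 = -1 := by norm_num [eps]

variable {M : ℕ}

noncomputable def chi (a u : Fin M → ZMod 2) : ℝ := ∏ l, eps (a l * u l)

lemma chi_add_right (a u v : Fin M → ZMod 2) :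
    chi a (u + v) = chi a u * chi a v := by
  simp only [chi, Pi.add_apply, mul_add, eps_add, Finset.prod_mul_distrib]

lemma chi_zero_left (u : Fin M → ZMod 2) : chi 0 u = 1 := by
  simp [chi, eps_zero]

lemma hn_card (u : Fin M → ZMod 2) :
    hammingNorm u = (univ.filter (fun l => u l ≠ 0)).card := rfl

lemma hn_le (u : Fin M → ZMod 2) : hammingNorm u ≤ M := by
  rw [hn_card]
  calc (univ.filter (fun l => u l ≠ 0)).card ≤ (univ : Finset (Fin M)).card :=
        Finset.card_filter_le _ _
    _ = M := by simp

lemma filter_eq_card (u : Fin M → ZMod 2) :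
    (univ.filter (fun l => u l = 0)).card = M - hammingNorm u := by
  have h1 := Finset.card_filter_add_card_filter_not (s := (univ : Finset (Fin M)))
    (p := fun l => u l = 0)
  simp only [Finset.card_univ, Fintype.card_fin] at h1
  have h2 : (univ.filter (fun l => ¬ u l = 0)).card = hammingNorm u := (hn_card u).symm
  omega

lemma prod_ite_norm (u : Fin M → ZMod 2) (A B : ℝ) :
    ∏ l, (if u l = 0 then A else B) = A ^ (M - hammingNorm u) * B ^ hammingNorm u := by
  rw [Finset.prod_ite, Finset.prod_const, Finset.prod_const, filter_eq_card]
  congr 1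

lemma sum_zmod2 (g : ZMod 2 → ℝ) : ∑ t : ZMod 2, g t = g 0 + g 1 := by
  have h : (univ : Finset (ZMod 2)) = {0, 1} := by decide
  rw [h, Finset.sum_insert (by decide), Finset.sum_singleton]

lemma point_identity (u : Fin M → ZMod 2) (X Y : ℝ) :
    ∑ a : Fin M → ZMod 2,
        chi a u * ((X + Y) ^ (M - hammingNorm a) * (X - Y) ^ hammingNorm a)
      = 2 ^ M * (X ^ (M - hammingNorm u) * Y ^ hammingNorm u) := by
  have key : ∀ a : Fin M → ZMod 2,
      chi a u * ((X + Y) ^ (M - hammingNorm a) * (X - Y) ^ hammingNorm a)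
        = ∏ l, (eps (a l * u l) * (if a l = 0 then X + Y else X - Y)) := by
    intro a
    rw [Finset.prod_mul_distrib, ← prod_ite_norm a (X + Y) (X - Y)]
    rfl
  rw [Finset.sum_congr rfl (fun a _ => key a)]
  have h2 : ∑ a : Fin M → ZMod 2, ∏ l, (eps (a l * u l) * (if a l = 0 then X + Y else X - Y))
      = ∏ l, ∑ t : ZMod 2, eps (t * u l) * (if t = 0 then X + Y else X - Y) := by
    rw [Finset.prod_univ_sum]
    rw [← Fintype.piFinset_univ]
  rw [h2]
  have inner : ∀ l, (∑ t : ZMod 2, eps (t * u l) * (if t = 0 then X + Y else X - Y))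
      = if u l = 0 then 2 * X else 2 * Y := by
    intro l
    rw [sum_zmod2]
    rcases zmod2_cases (u l) with h | h <;>
      simp [h, eps_zero', eps_one'] <;> ring
  rw [Finset.prod_congr rfl (fun l _ => inner l), prod_ite_norm u (2 * X) (2 * Y),
    mul_pow, mul_pow]
  have h3 : (2 : ℝ) ^ (M - hammingNorm u) * 2 ^ hammingNorm u = 2 ^ M :=
    pow_sub_mul_pow 2 (hn_le u)
  calc 2 ^ (M - hammingNorm u) * X ^ (M - hammingNorm u) * ((2:ℝ) ^ hammingNorm u * Y ^ hammingNorm u)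
      = (2 ^ (M - hammingNorm u) * 2 ^ hammingNorm u) * (X ^ (M - hammingNorm u) * Y ^ hammingNorm u) := by ring
    _ = 2 ^ M * (X ^ (M - hammingNorm u) * Y ^ hammingNorm u) := by rw [h3]

lemma sum_chi_univ (a : Fin M → ZMod 2) (ha : a ≠ 0) :
    ∑ u : Fin M → ZMod 2, chi a u = 0 := by
  have h : ∑ u : Fin M → ZMod 2, chi a u = ∏ l, ∑ t : ZMod 2, eps (a l * t) := by
    rw [Finset.prod_univ_sum, ← Fintype.piFinset_univ]
    rfl
  rw [h]
  obtain ⟨l0, hl0⟩ : ∃ l, a l ≠ 0 := by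
    by_contra hcon; push_neg at hcon; exact ha (funext hcon)
  apply Finset.prod_eq_zero (Finset.mem_univ l0)
  have h1 : a l0 = 1 := (zmod2_cases _).resolve_left hl0
  rw [sum_zmod2]
  simp [h1, eps_zero', eps_one']

lemma zmod2_ne_iff (a b : ZMod 2) (h : a ≠ b) : a = b + 1 := by revert h; revert a b; decide

def psi (i : Fin M) (c : Fin M → ZMod 2) (p : ZMod 2 × Fin M) : Fin M → ZMod 2 :=
  fun l => if l = i then c i + p.1 else if l = p.2 then c p.2 + 1 else c l

def ball (i : Fin M) (c : Fin M → ZMod 2) : Finset (Fin M → ZMod 2) :=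
  univ.filter (fun u => (univ.filter (fun j => j ≠ i ∧ u j ≠ c j)).card ≤ 1)

lemma psi_inj (i : Fin M) (c : Fin M → ZMod 2) : Function.Injective (psi i c) := by
  rintro ⟨s, j⟩ ⟨s', j'⟩ h
  have hs : s = s' := by
    have hi := congrFun h i
    simp only [psi, if_pos rfl] at hi
    exact add_left_cancel hi
  have hj : j = j' := by
    by_contra hne
    by_cases hji : j = i
    · have hji' : j' ≠ i := by rintro rfl; exact hne hji
      have h2 := congrFun h j'
      simp only [psi, if_neg hji', if_neg (show ¬ j' = j by rintro rfl; exact hji' hji),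
        if_true] at h2
      exact absurd (left_eq_add.mp h2) (by decide)
    · have h2 := congrFun h j
      simp only [psi, if_neg hji, if_true, if_neg (show ¬ j = j' from hne)] at h2
      exact absurd (add_eq_left.mp h2) (by decide)
  exact Prod.ext hs hj

lemma mem_ball_iff (i : Fin M) (c u : Fin M → ZMod 2) :
    u ∈ ball i c ↔ (univ.filter (fun j => j ≠ i ∧ u j ≠ c j)).card ≤ 1 := by
  simp [ball]

lemma image_psi (i : Fin M) (c : Fin M → ZMod 2) :
    Finset.image (psi i c) univ = ball i c := by
  apply Finset.ext; intro u
  rw [Finset.mem_image, mem_ball_iff]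
  constructor
  · rintro ⟨⟨s, j⟩, -, rfl⟩
    have hsub : (univ.filter (fun l => l ≠ i ∧ psi i c (s, j) l ≠ c l)) ⊆ {j} := by
      intro l hl
      simp only [Finset.mem_filter, Finset.mem_univ, true_and] at hl
      obtain ⟨hli, hlc⟩ := hl
      simp only [Finset.mem_singleton]
      by_contra hlj
      exact hlc (by simp [psi, if_neg hli, if_neg hlj])
    calc _ ≤ ({j} : Finset (Fin M)).card := Finset.card_le_card hsub
      _ = 1 := Finset.card_singleton j
  · intro hcard
    by_cases h0 : (univ.filter (fun j => j ≠ i ∧ u j ≠ c j)).card = 0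
    · refine ⟨(u i - c i, i), Finset.mem_univ _, ?_⟩
      funext l
      by_cases hli : l = i
      · subst hli; simp only [psi, if_true]; ring
      · have hl : l ∉ univ.filter (fun j => j ≠ i ∧ u j ≠ c j) := by
          rw [Finset.card_eq_zero] at h0; rw [h0]; exact Finset.notMem_empty l
        have hul : u l = c l := by
          by_contra hne
          exact hl (by simp [hli, hne])
        simp [psi, if_neg hli, hul]
    · have h1 : (univ.filter (fun j => j ≠ i ∧ u j ≠ c j)).card = 1 := by omega
      obtain ⟨j0, hj0⟩ := Finset.card_eq_one.mp h1
      have hj0m : j0 ∈ univ.filter (fun j => j ≠ i ∧ u j ≠ c j) := by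
        rw [hj0]; exact Finset.mem_singleton_self j0
      rw [Finset.mem_filter] at hj0m
      obtain ⟨-, hj0i, hj0c⟩ := hj0m
      refine ⟨(u i - c i, j0), Finset.mem_univ _, ?_⟩
      funext l
      by_cases hli : l = i
      · subst hli; simp only [psi, if_true]; ring
      · by_cases hlj : l = j0
        · subst hlj
          simp only [psi, if_neg hli, if_true]
          exact (zmod2_ne_iff _ _ hj0c).symm
        · have hl : l ∉ univ.filter (fun j => j ≠ i ∧ u j ≠ c j) := by
            rw [hj0]; simp [hlj]
          have hul : u l = c l := by
            by_contra hne
            exact hl (by simp [hli, hne])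
          simp [psi, if_neg hli, if_neg hlj, hul]

lemma card_ball (i : Fin M) (c : Fin M → ZMod 2) : (ball i c).card = 2 * M := by
  rw [← image_psi, Finset.card_image_of_injective _ (psi_inj i c)]
  simp

lemma ball_disjoint {i : Fin M} {c c' : Fin M → ZMod 2} (h4 : 4 ≤ hammingDist c c') :
    Disjoint (ball i c) (ball i c') := by
  rw [Finset.disjoint_left]
  intro u hu hu'
  rw [mem_ball_iff] at hu hu'
  have hsub : (univ.filter fun l => c l ≠ c' l) ⊆
      insert i ((univ.filter fun j => j ≠ i ∧ u j ≠ c j) ∪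
        (univ.filter fun j => j ≠ i ∧ u j ≠ c' j)) := by
    intro l hl
    simp only [Finset.mem_filter, Finset.mem_univ, true_and] at hl
    rw [Finset.mem_insert]
    by_cases hli : l = i
    · exact Or.inl hli
    · right
      rw [Finset.mem_union]
      by_cases hu1 : u l = c l
      · right; simp only [Finset.mem_filter, Finset.mem_univ, true_and]
        exact ⟨hli, by rw [hu1]; exact hl⟩
      · left; simp only [Finset.mem_filter, Finset.mem_univ, true_and]
        exact ⟨hli, hu1⟩
  have hd : hammingDist c c' ≤ 3 := by
    have he : hammingDist c c' = (univ.filter fun l => c l ≠ c' l).card := rfl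
    rw [he]
    calc (univ.filter fun l => c l ≠ c' l).card
        ≤ _ := Finset.card_le_card hsub
      _ ≤ ((univ.filter fun j => j ≠ i ∧ u j ≠ c j) ∪
            (univ.filter fun j => j ≠ i ∧ u j ≠ c' j)).card + 1 := Finset.card_insert_le _ _
      _ ≤ ((univ.filter fun j => j ≠ i ∧ u j ≠ c j).card +
            (univ.filter fun j => j ≠ i ∧ u j ≠ c' j).card) + 1 := by
          exact Nat.add_le_add_right (Finset.card_union_le _ _) 1
      _ ≤ 3 := by omega
  omega

lemma sum_ball (S : Finset (Fin M → ZMod 2)) (hScard : S.card * (2 * M) = 2 ^ M)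
    (hd : ∀ u ∈ S, ∀ v ∈ S, u ≠ v → 4 ≤ hammingDist u v) (i : Fin M) (g : (Fin M → ZMod 2) → ℝ) :
    ∑ u : Fin M → ZMod 2, g u = ∑ c ∈ S, ∑ u ∈ ball i c, g u := by
  have hdisj : ∀ c ∈ S, ∀ c' ∈ S, c ≠ c' → Disjoint (ball i c) (ball i c') :=
    fun c hc c' hc' hne => ball_disjoint (hd _ hc _ hc' hne)
  have hbu : S.biUnion (ball i) = univ := by
    apply Finset.eq_univ_of_card
    rw [Finset.card_biUnion hdisj, Finset.sum_congr rfl (fun c _ => card_ball i c),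
      Finset.sum_const, smul_eq_mul, hScard]
    simp
  rw [show (univ : Finset (Fin M → ZMod 2)) = S.biUnion (ball i) from hbu.symm,
    Finset.sum_biUnion hdisj]

def dvec (i : Fin M) (p : ZMod 2 × Fin M) : Fin M → ZMod 2 :=
  fun l => if l = i then p.1 else if l = p.2 then 1 else 0

lemma psi_eq_add (i : Fin M) (c : Fin M → ZMod 2) (p : ZMod 2 × Fin M) :
    psi i c p = c + dvec i p := by
  funext l
  by_cases hli : l = i
  · subst hli; simp only [psi, dvec, if_true, Pi.add_apply]
  · by_cases hlj : l = p.2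
    · subst hlj; simp only [psi, dvec, if_neg hli, if_true, Pi.add_apply]
    · simp only [psi, dvec, if_neg hli, if_neg hlj, Pi.add_apply, add_zero]

lemma chi_dvec (a : Fin M → ZMod 2) (i : Fin M) (hai : a i = 0) (p : ZMod 2 × Fin M) :
    chi a (dvec i p) = eps (a p.2) := by
  obtain ⟨s, j⟩ := p
  by_cases hji : j = i
  · subst hji
    have h1 : chi a (dvec j (s, j)) = 1 := by
      apply Finset.prod_eq_one
      intro l _
      by_cases hl : l = j
      · subst hl; simp [dvec, hai, eps_zero']
      · simp [dvec, if_neg hl, eps_zero']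
    rw [h1, hai, eps_zero']
  · rw [chi]
    rw [Finset.prod_eq_single j]
    · simp [dvec, if_neg hji]
    · intro l _ hl
      by_cases hli : l = i
      · subst hli; simp [dvec, hai, eps_zero']
      · simp [dvec, if_neg hli, if_neg hl, eps_zero']
    · intro h; exact absurd (Finset.mem_univ j) h

lemma sum_eps_line (a : Fin M → ZMod 2) :
    ∑ j, eps (a j) = (M : ℝ) - 2 * hammingNorm a := by
  have h : ∀ j, eps (a j) = 1 - 2 * (if a j ≠ 0 then (1 : ℝ) else 0) := by
    intro j
    set_option linter.unnecessarySeqFocus false in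
    rcases zmod2_cases (a j) with h | h <;> simp [h, eps_zero', eps_one'] <;> norm_num
  rw [Finset.sum_congr rfl (fun j _ => h j)]
  rw [Finset.sum_sub_distrib, Finset.sum_const, ← Finset.mul_sum, Finset.sum_boole]
  simp [hn_card]

lemma sum_chi_ball (i : Fin M) (c a : Fin M → ZMod 2) (hai : a i = 0) :
    ∑ u ∈ ball i c, chi a u = chi a c * (2 * ((M : ℝ) - 2 * hammingNorm a)) := by
  rw [← image_psi, Finset.sum_image (fun p _ q _ h => psi_inj i c h)]
  have h1 : ∀ p : ZMod 2 × Fin M, chi a (psi i c p) = chi a c * eps (a p.2) := by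
    intro p
    rw [psi_eq_add, chi_add_right, chi_dvec a i hai]
  rw [Finset.sum_congr rfl (fun p _ => h1 p), ← Finset.mul_sum]
  congr 1
  rw [Fintype.sum_prod_type]
  have h2 : ∀ s : ZMod 2, ∑ j, eps (a j) = (M : ℝ) - 2 * hammingNorm a :=
    fun _ => sum_eps_line a
  rw [Finset.sum_congr rfl (fun s _ => h2 s), Finset.sum_const]
  simp [ZMod.card]

lemma hatS_zero (S : Finset (Fin M → ZMod 2)) (hScard : S.card * (2 * M) = 2 ^ M)
    (hd : ∀ u ∈ S, ∀ v ∈ S, u ≠ v → 4 ≤ hammingDist u v)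
    (a : Fin M → ZMod 2) (ha0 : a ≠ 0) (i : Fin M) (hai : a i = 0)
    (haw : 2 * hammingNorm a ≠ M) :
    ∑ c ∈ S, chi a c = 0 := by
  have h1 := sum_ball S hScard hd i (chi a)
  rw [sum_chi_univ a ha0,
    Finset.sum_congr rfl (fun c _ => sum_chi_ball i c a hai), ← Finset.sum_mul] at h1
  have hK : (2 * ((M : ℝ) - 2 * hammingNorm a)) ≠ 0 := by
    intro h0
    apply haw
    have : (M : ℝ) = 2 * hammingNorm a := by linarith
    exact_mod_cast this.symm
  exact (mul_eq_zero.mp h1.symm).resolve_right hK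

lemma chi_ones (c : Fin M → ZMod 2) :
    chi (fun _ => 1) c = (-1 : ℝ) ^ hammingNorm c := by
  have h : ∀ l, eps ((1 : ZMod 2) * c l) = if c l = 0 then (1 : ℝ) else -1 := by
    intro l
    rcases zmod2_cases (c l) with h | h <;> simp [h, eps_zero', eps_one']
  rw [chi, Finset.prod_congr rfl (fun l _ => h l), prod_ite_norm, one_pow, one_mul]

lemma neg_one_pow_congr {a b : ℕ} (h : a % 2 = b % 2) : (-1 : ℝ) ^ a = (-1 : ℝ) ^ b := by
  rcases Nat.even_or_odd a with ha | ha
  · have hb : Even b := by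
      rw [Nat.even_iff] at ha ⊢
      omega
    rw [ha.neg_one_pow, hb.neg_one_pow]
  · have hb : Odd b := by
      rw [Nat.odd_iff] at ha ⊢
      omega
    rw [ha.neg_one_pow, hb.neg_one_pow]

lemma code_enum (hM : 1 ≤ M) (S : Finset (Fin M → ZMod 2))
    (hScard : S.card * (2 * M) = 2 ^ M)
    (hd : ∀ u ∈ S, ∀ v ∈ S, u ≠ v → 4 ≤ hammingDist u v)
    (p : ℕ) (hpar : ∀ u ∈ S, hammingNorm u % 2 = p % 2)
    (X Y : ℝ) :
    (2 : ℝ) ^ M * ∑ u ∈ S, X ^ (M - hammingNorm u) * Y ^ hammingNorm u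
      = (S.card : ℝ) * ((X + Y) ^ M + (-1 : ℝ) ^ p * (X - Y) ^ M)
        + (∑ a ∈ univ.filter (fun a : Fin M → ZMod 2 => 2 * hammingNorm a = M),
            ∑ c ∈ S, chi a c)
          * ((X + Y) ^ (M - M / 2) * (X - Y) ^ (M / 2)) := by
  classical
  set F : (Fin M → ZMod 2) → ℝ := fun a =>
    (∑ c ∈ S, chi a c) * ((X + Y) ^ (M - hammingNorm a) * (X - Y) ^ hammingNorm a) with hF
  have step1 : (2 : ℝ) ^ M * ∑ u ∈ S, X ^ (M - hammingNorm u) * Y ^ hammingNorm u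
      = ∑ a : Fin M → ZMod 2, F a := by
    rw [Finset.mul_sum]
    rw [Finset.sum_congr rfl (fun u _ => (point_identity u X Y).symm)]
    rw [Finset.sum_comm]
    apply Finset.sum_congr rfl
    intro a _
    simp only [hF]
    rw [Finset.sum_mul]
  rw [step1]
  set E : Finset (Fin M → ZMod 2) :=
    univ.filter (fun a : Fin M → ZMod 2 => 2 * hammingNorm a = M) with hE
  set ones : Fin M → ZMod 2 := fun _ => 1 with hones
  have hn_ones : hammingNorm ones = M := by
    rw [hn_card]
    rw [Finset.filter_true_of_mem (fun l _ => by simp [hones])]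
    simp
  have hn_zero : hammingNorm (0 : Fin M → ZMod 2) = 0 := by simp
  have h0ones : (0 : Fin M → ZMod 2) ≠ ones := by
    intro h
    have := congrFun h ⟨0, hM⟩
    exact absurd this (by norm_num [hones])
  have h0E : (0 : Fin M → ZMod 2) ∉ E := by
    simp only [hE, Finset.mem_filter, hn_zero]
    omega
  have honesE : ones ∉ E := by
    simp only [hE, Finset.mem_filter, hn_ones]
    intro h
    omega
  have step2 : ∑ a : Fin M → ZMod 2, F a = ∑ a ∈ insert 0 (insert ones E), F a := by
    symm
    apply Finset.sum_subset (Finset.subset_univ _)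
    intro a _ ha
    simp only [Finset.mem_insert, hE, Finset.mem_filter, Finset.mem_univ, true_and,
      not_or] at ha
    obtain ⟨ha0, haones, haw⟩ := ha
    obtain ⟨i, hi⟩ : ∃ i, a i = 0 := by
      by_contra hc
      push_neg at hc
      exact haones (funext fun l => ((zmod2_cases (a l)).resolve_left (hc l)).trans rfl)
    simp only [hF]
    rw [hatS_zero S hScard hd a ha0 i hi haw, zero_mul]
  rw [step2, Finset.sum_insert (by simp [Finset.mem_insert, h0E, h0ones]),
    Finset.sum_insert honesE]
  have hF0 : F 0 = (S.card : ℝ) * (X + Y) ^ M := by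
    rw [hF]
    simp only [hn_zero, Nat.sub_zero, pow_zero, mul_one]
    rw [Finset.sum_congr rfl (fun c _ => chi_zero_left c), Finset.sum_const]
    simp
  have hFones : F ones = (S.card : ℝ) * ((-1 : ℝ) ^ p * (X - Y) ^ M) := by
    rw [hF]
    simp only [hn_ones, Nat.sub_self, pow_zero, one_mul]
    have : ∀ c ∈ S, chi ones c = (-1 : ℝ) ^ p := by
      intro c hc
      rw [hones, chi_ones, neg_one_pow_congr (hpar c hc)]
    rw [Finset.sum_congr rfl this, Finset.sum_const]
    simp [mul_assoc]
  have hFE : ∑ a ∈ E, F a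
      = (∑ a ∈ E, ∑ c ∈ S, chi a c) * ((X + Y) ^ (M - M / 2) * (X - Y) ^ (M / 2)) := by
    rw [Finset.sum_mul]
    apply Finset.sum_congr rfl
    intro a ha
    simp only [hE, Finset.mem_filter] at ha
    have h1 : hammingNorm a = M / 2 := by omega
    simp only [hF, h1]
  rw [hF0, hFones, hFE]
  ring

lemma eval_one_zero (S : Finset (Fin M → ZMod 2)) (h0 : (0 : Fin M → ZMod 2) ∉ S) :
    ∑ u ∈ S, (1 : ℝ) ^ (M - hammingNorm u) * (0 : ℝ) ^ hammingNorm u = 0 := by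
  apply Finset.sum_eq_zero
  intro u hu
  have hu0 : u ≠ 0 := fun h => h0 (h ▸ hu)
  have : hammingNorm u ≠ 0 := by
    intro h
    exact hu0 (by simpa using h)
  rw [zero_pow this, mul_zero]

lemma enum_congr (hM : 1 ≤ M) (S S' : Finset (Fin M → ZMod 2))
    (hcard : S.card = S'.card)
    (hScard : S.card * (2 * M) = 2 ^ M) (hScard' : S'.card * (2 * M) = 2 ^ M)
    (hd : ∀ u ∈ S, ∀ v ∈ S, u ≠ v → 4 ≤ hammingDist u v)
    (hd' : ∀ u ∈ S', ∀ v ∈ S', u ≠ v → 4 ≤ hammingDist u v)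
    (p : ℕ) (hpar : ∀ u ∈ S, hammingNorm u % 2 = p % 2)
    (hpar' : ∀ u ∈ S', hammingNorm u % 2 = p % 2)
    (h0 : (0 : Fin M → ZMod 2) ∉ S) (h0' : (0 : Fin M → ZMod 2) ∉ S')
    (X Y : ℝ) :
    ∑ u ∈ S, X ^ (M - hammingNorm u) * Y ^ hammingNorm u
      = ∑ u ∈ S', X ^ (M - hammingNorm u) * Y ^ hammingNorm u := by
  have hT : (∑ a ∈ univ.filter (fun a : Fin M → ZMod 2 => 2 * hammingNorm a = M),
        ∑ c ∈ S, chi a c)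
      = ∑ a ∈ univ.filter (fun a : Fin M → ZMod 2 => 2 * hammingNorm a = M),
        ∑ c ∈ S', chi a c := by
    have e1 := code_enum hM S hScard hd p hpar 1 0
    have e2 := code_enum hM S' hScard' hd' p hpar' 1 0
    rw [eval_one_zero S h0, mul_zero] at e1
    rw [eval_one_zero S' h0', mul_zero] at e2
    simp only [add_zero, sub_zero, one_pow, mul_one] at e1 e2
    rw [hcard] at e1
    linarith
  have key := fun (T : Finset (Fin M → ZMod 2)) => code_enum hM
  have e1 := code_enum hM S hScard hd p hpar X Y
  have e2 := code_enum hM S' hScard' hd' p hpar' X Y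
  rw [hcard, hT] at e1
  have h2M : ((2 : ℝ) ^ M) ≠ 0 := by positivity
  apply mul_left_cancel₀ h2M
  rw [e1, e2]

end Stmt13

open Finset Stmt13

/-- For `𝒞 ⊆ Z_{2^k}^n` and `C̃ = Φ(𝒞)`, the weight enumerator of `C̃` equals the
symmetrized weight enumerator of `𝒞` evaluated at the weight enumerators of
`H_0`, `H_1`, `H_2`:
`W_{C̃}(X,Y) = SW_𝒞(W_{H_0}(X,Y), W_{H_1}(X,Y), W_{H_2}(X,Y))`,
where the symbol `0` gets `W_{H_0}`, odd symbols get `W_{H_1}` and nonzero even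
symbols get `W_{H_2}`. Here `m = 2^{k-1}` and `{H_j}` is a partition of `Z_2^m` into
extended 1-perfect codes with `0 ∈ H_0` and weight parity of `H_j` equal to the
parity of `j`. -/
theorem stmt_13 (k n : ℕ) (hk : 2 ≤ k)
    (H : ZMod (2 ^ k) → Finset (Fin (2 ^ (k - 1)) → ZMod 2))
    (hpart : ∀ u : Fin (2 ^ (k - 1)) → ZMod 2, ∃! j, u ∈ H j)
    (hcard : ∀ j, (H j).card = 2 ^ (2 ^ (k - 1)) / (2 * 2 ^ (k - 1)))
    (hdist4 : ∀ j, ∀ u ∈ H j, ∀ v ∈ H j, u ≠ v → 4 ≤ hammingDist u v)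
    (hzero : (0 : Fin (2 ^ (k - 1)) → ZMod 2) ∈ H 0)
    (hparity : ∀ j, ∀ u ∈ H j, hammingNorm u % 2 = (ZMod.val j) % 2)
    (C : Finset (Fin n → ZMod (2 ^ k))) :
    ∀ X Y : ℝ,
      (∑ᶠ u ∈ {u : Fin n × Fin (2 ^ (k - 1)) → ZMod 2 |
            ∃ x ∈ C, ∀ i, (fun j => u (i, j)) ∈ H (x i)},
          X ^ (n * 2 ^ (k - 1) - hammingNorm u) * Y ^ (hammingNorm u))
        = ∑ z ∈ C, ∏ i,
            (if z i = 0 then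
              ∑ c ∈ H 0, X ^ (2 ^ (k - 1) - hammingNorm c) * Y ^ (hammingNorm c)
            else if Odd (z i).val then
              ∑ c ∈ H 1, X ^ (2 ^ (k - 1) - hammingNorm c) * Y ^ (hammingNorm c)
            else
              ∑ c ∈ H 2, X ^ (2 ^ (k - 1) - hammingNorm c) * Y ^ (hammingNorm c)) := by
  intro X Y
  classical
  -- basic numerics
  have hM1 : 1 ≤ 2 ^ (k - 1) := Nat.one_le_two_pow
  have h2M : 2 * 2 ^ (k - 1) = 2 ^ k := by
    rw [← pow_succ']
    congr 1
    omega
  have hkM : k ≤ 2 ^ (k - 1) := by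
    have := Nat.lt_two_pow_self (n := k - 1)
    omega
  have hcard' : ∀ j, (H j).card * (2 * 2 ^ (k - 1)) = 2 ^ 2 ^ (k - 1) := by
    intro j
    rw [hcard j]
    apply Nat.div_mul_cancel
    rw [h2M]
    exact pow_dvd_pow 2 hkM
  have h4k : 4 ≤ 2 ^ k := by
    calc 4 = 2 ^ 2 := by norm_num
      _ ≤ 2 ^ k := Nat.pow_le_pow_right (by norm_num) hk
  haveI : Fact (1 < 2 ^ k) := ⟨by omega⟩
  haveI : NeZero (2 ^ k) := ⟨by omega⟩
  have hval1 : (1 : ZMod (2 ^ k)).val = 1 := ZMod.val_one _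
  have hval2 : (2 : ZMod (2 ^ k)).val = 2 := by
    have h := ZMod.val_cast_of_lt (show 2 < 2 ^ k by omega)
    simpa using h
  have h1ne0' : (1 : ZMod (2 ^ k)) ≠ 0 := by
    intro h
    have := congrArg ZMod.val h
    rw [hval1, ZMod.val_zero] at this
    omega
  have h2ne0 : (2 : ZMod (2 ^ k)) ≠ 0 := by
    intro h
    have := congrArg ZMod.val h
    rw [hval2, ZMod.val_zero] at this
    omega
  have h0notin : ∀ j : ZMod (2 ^ k), j ≠ 0 → (0 : Fin (2 ^ (k - 1)) → ZMod 2) ∉ H j := by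
    intro j hj h0j
    obtain ⟨j0, hj0, huniq⟩ := hpart 0
    exact hj ((huniq j h0j).trans (huniq 0 hzero).symm)
  -- per-symbol weight enumerator classification
  have hsym : ∀ j : ZMod (2 ^ k),
      (∑ c ∈ H j, X ^ (2 ^ (k - 1) - hammingNorm c) * Y ^ hammingNorm c)
        = (if j = 0 then ∑ c ∈ H 0, X ^ (2 ^ (k - 1) - hammingNorm c) * Y ^ hammingNorm c
          else if Odd j.val then ∑ c ∈ H 1, X ^ (2 ^ (k - 1) - hammingNorm c) * Y ^ hammingNorm c
          else ∑ c ∈ H 2, X ^ (2 ^ (k - 1) - hammingNorm c) * Y ^ hammingNorm c) := by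
    intro j
    by_cases hj0 : j = 0
    · rw [if_pos hj0, hj0]
    · rw [if_neg hj0]
      by_cases hodd : Odd j.val
      · rw [if_pos hodd]
        apply enum_congr hM1 (H j) (H 1) (by rw [hcard, hcard]) (hcard' j) (hcard' 1)
          (hdist4 j) (hdist4 1) 1
        · intro u hu
          rw [hparity j u hu, Nat.odd_iff.mp hodd]
        · intro u hu
          rw [hparity 1 u hu, hval1]
        · exact h0notin j hj0
        · exact h0notin 1 h1ne0'
      · rw [if_neg hodd]
        apply enum_congr hM1 (H j) (H 2) (by rw [hcard, hcard]) (hcard' j) (hcard' 2)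
          (hdist4 j) (hdist4 2) 2
        · intro u hu
          rw [hparity j u hu, Nat.not_odd_iff.mp hodd]
        · intro u hu
          rw [hparity 2 u hu, hval2]
        · exact h0notin j hj0
        · exact h0notin 2 h2ne0
  -- the Finset version of Φ(C)
  set P : (Fin n → ZMod (2 ^ k)) → Finset (Fin n × Fin (2 ^ (k - 1)) → ZMod 2) :=
    fun x => univ.filter (fun u => ∀ i, (fun j => u (i, j)) ∈ H (x i)) with hP
  have hset : {u : Fin n × Fin (2 ^ (k - 1)) → ZMod 2 | ∃ x ∈ C, ∀ i, (fun j => u (i, j)) ∈ H (x i)}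
      = ↑(C.biUnion P) := by
    ext u
    simp [hP, Finset.mem_biUnion]
  rw [hset, finsum_mem_coe_finset]
  have hdisj : (↑C : Set (Fin n → ZMod (2 ^ k))).PairwiseDisjoint P := by
    intro x hx y hy hxy
    rw [Function.onFun, Finset.disjoint_left]
    intro u hux huy
    simp only [hP, Finset.mem_filter, Finset.mem_univ, true_and] at hux huy
    obtain ⟨i, hi⟩ : ∃ i, x i ≠ y i := by
      by_contra hc
      push_neg at hc
      exact hxy (funext hc)
    obtain ⟨j0, hj0, huniq⟩ := hpart (fun j => u (i, j))
    exact hi ((huniq (x i) (hux i)).trans (huniq (y i) (huy i)).symm)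
  rw [Finset.sum_biUnion hdisj]
  apply Finset.sum_congr rfl
  intro x hx
  -- product formula per codeword
  have hprod : ∑ u ∈ P x, X ^ (n * 2 ^ (k - 1) - hammingNorm u) * Y ^ hammingNorm u
      = ∏ i, ∑ c ∈ H (x i), X ^ (2 ^ (k - 1) - hammingNorm c) * Y ^ hammingNorm c := by
    rw [Finset.prod_univ_sum]
    apply Finset.sum_nbij' (i := fun u => fun i j => u (i, j))
      (j := fun g => fun p => g p.1 p.2)
    · intro u hu
      simp only [hP, Finset.mem_filter, Finset.mem_univ, true_and] at hu
      rw [Fintype.mem_piFinset]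
      exact hu
    · intro g hg
      rw [Fintype.mem_piFinset] at hg
      simp only [hP, Finset.mem_filter, Finset.mem_univ, true_and]
      exact fun i => hg i
    · intro u _
      rfl
    · intro g _
      rfl
    · intro u hu
      have hslice : ∀ i : Fin n, hammingNorm (fun j => u (i, j)) ≤ 2 ^ (k - 1) :=
        fun i => hn_le _
      have hsplit : hammingNorm u = ∑ i, hammingNorm (fun j => u (i, j)) := by
        have hgen : hammingNorm u
            = (univ.filter (fun p : Fin n × Fin (2 ^ (k - 1)) => u p ≠ 0)).card := rfl
        rw [hgen, Finset.card_filter, Fintype.sum_prod_type]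
        apply Finset.sum_congr rfl
        intro i _
        rw [hn_card, Finset.card_filter]
      have hsum : ∑ i, (2 ^ (k - 1) - hammingNorm (fun j => u (i, j))) + ∑ i, hammingNorm (fun j => u (i, j))
          = n * 2 ^ (k - 1) := by
        rw [← Finset.sum_add_distrib]
        rw [Finset.sum_congr rfl (fun i _ => Nat.sub_add_cancel (hslice i))]
        rw [Finset.sum_const]
        simp [mul_comm]
      rw [Finset.prod_mul_distrib, Finset.prod_pow_eq_pow_sum, Finset.prod_pow_eq_pow_sum]
      rw [hsplit]
      beta_reduce
      congr 2
      omega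
  rw [hprod]
  apply Finset.prod_congr rfl
  intro i _
  exact hsym (x i)
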